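/- For every natural number m, Σ_{j=0}^{m} Σ_{k=0}^{m−j} C(m,j) · C(m−j,k) · j^j · k^k · (m−j−k)^{m−j−k} = Σ_{j=0}^{m} m^{m−j} · C(m,j) · (j+1)!, where the convention 0^0 = 1 is used. -/
import Mathlib

open Finset

namespace BetaAux

/-- `D n z = Σ_t n↓t z^(n-t)` -/
def Dd (n z : ℕ) : ℕ := ∑ t ∈ range (n+1), n.descFactorial t * z ^ (n - t)

def Pp (n x y : ℕ) : ℕ := ∑ k ∈ range (n+1), n.choose k * ((x+k)^k * (y+(n-k))^(n-k))

def Qq (n x y : ℕ) : ℕ := ∑ k ∈ range (n+1), n.choose k * ((x+k)^(k+1) * (y+(n-k))^(n-k))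

def Ee (n x s : ℕ) : ℕ :=
  ∑ t ∈ range (n+1), n.descFactorial t * (((t+1)*x + (t+1).choose 2) * s ^ (n-t))

lemma pascal_sum (n : ℕ) (g : ℕ → ℕ) :
    ∑ k ∈ range (n+2), (n+1).choose k * g k
      = ∑ k ∈ range (n+1), n.choose k * g (k+1) + ∑ k ∈ range (n+1), n.choose k * g k := by
  have e1 := Finset.sum_range_succ' (fun k => (n+1).choose k * g k) (n+1)
  have e2 := Finset.sum_range_succ' (fun k => n.choose k * g k) (n+1)
  have e3 := Finset.sum_range_succ (fun k => n.choose k * g k) (n+1)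
  simp only [Nat.choose_zero_right, Nat.choose_succ_self, one_mul, zero_mul, add_zero] at e1 e2 e3
  have e4 : ∀ k, (n+1).choose (k+1) * g (k+1)
      = n.choose k * g (k+1) + n.choose (k+1) * g (k+1) := by
    intro k; rw [Nat.choose_succ_succ']; ring
  rw [e1, Finset.sum_congr rfl (fun k _ => e4 k), Finset.sum_add_distrib]
  have : (∑ k ∈ range (n+1), n.choose (k+1) * g (k+1)) + g 0
      = ∑ k ∈ range (n+1), n.choose k * g k := by rw [← e2, e3]
  linarith [this]

lemma Qq_reflect (n x y : ℕ) :
    ∑ k ∈ range (n+1), n.choose k * ((x+k)^k * ((y+1)+(n-k))^((n-k)+1))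
      = Qq n (y+1) x := by
  rw [Qq, ← Finset.sum_range_reflect
    (fun k => n.choose k * ((x+k)^k * ((y+1)+(n-k))^((n-k)+1))) (n+1)]
  apply Finset.sum_congr rfl
  intro k hk
  have hk' : k ≤ n := by have := Finset.mem_range.mp hk; omega
  have h1 : n + 1 - 1 - k = n - k := by omega
  have h2 : n - (n - k) = k := by omega
  rw [h1, h2, Nat.choose_symm hk']
  ring

lemma Pp_succ (n x y : ℕ) : Pp (n+1) x y = Qq n (x+1) y + Qq n (y+1) x := by
  rw [Pp]
  rw [show n+1+1 = n+2 from rfl,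
    pascal_sum n (fun k => (x+k)^k * (y+((n+1)-k))^((n+1)-k))]
  congr 1
  · rw [Qq]
    apply Finset.sum_congr rfl
    intro k hk
    have hk' : k ≤ n := by have := Finset.mem_range.mp hk; omega
    have h1 : (n+1) - (k+1) = n - k := by omega
    have h2 : x + (k+1) = (x+1) + k := by ring
    simp only [h1, h2]
  · rw [← Qq_reflect n x y]
    apply Finset.sum_congr rfl
    intro k hk
    have hk' : k ≤ n := by have := Finset.mem_range.mp hk; omega
    have h1 : (n+1) - k = (n-k)+1 := by omega
    have h2 : y + ((n-k)+1) = (y+1) + (n-k) := by ring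
    rw [h1, h2]

lemma Qq_succ (n x y : ℕ) : Qq (n+1) x y = x * Pp (n+1) x y + (n+1) * Qq n (x+1) y := by
  rw [Qq, Pp]
  have e0 : ∀ k, (n+1).choose k * ((x+k)^(k+1) * (y+((n+1)-k))^((n+1)-k))
      = x * ((n+1).choose k * ((x+k)^k * (y+((n+1)-k))^((n+1)-k)))
        + k * (n+1).choose k * ((x+k)^k * (y+((n+1)-k))^((n+1)-k)) := by
    intro k
    have : (x+k)^(k+1) = (x+k) * (x+k)^k := by ring
    rw [this]; ring
  rw [Finset.sum_congr rfl (fun k _ => e0 k), Finset.sum_add_distrib, ← Finset.mul_sum]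
  congr 1
  rw [Finset.sum_range_succ'
    (fun k => k * (n+1).choose k * ((x+k)^k * (y+((n+1)-k))^((n+1)-k))) (n+1)]
  simp only [zero_mul, add_zero]
  rw [Qq, Finset.mul_sum]
  apply Finset.sum_congr rfl
  intro k hk
  have hk' : k ≤ n := by have := Finset.mem_range.mp hk; omega
  have h1 : (n+1) - (k+1) = n - k := by omega
  have h2 : x + (k+1) = (x+1) + k := by ring
  have h3 : (k+1) * (n+1).choose (k+1) = (n+1) * n.choose k := by
    rw [mul_comm]
    exact (Nat.add_one_mul_choose_eq n k).symm
  rw [h1, h2, h3]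
  ring

lemma c1 (n t : ℕ) (h : t ≤ n) (q : ℕ) :
    (n+1).descFactorial (t+1) * q + n * (n.descFactorial t * ((t+1) * q))
      = n.descFactorial (t+1) * ((t+2) * q) + n.descFactorial t * ((t+1)^2 * q) := by
  obtain ⟨u, rfl⟩ := Nat.exists_eq_add_of_le h
  rw [Nat.succ_descFactorial_succ, Nat.descFactorial_succ]
  have h2 : t + u - t = u := by omega
  rw [h2]
  ring

lemma keyD (n s : ℕ) :
    Dd (n+1) s + n * ∑ t ∈ range (n+1), n.descFactorial t * ((t+1) * s^(n-t))
    = (∑ t ∈ range (n+1), n.descFactorial t * ((t+1) * (s * s^(n-t))))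
      + ∑ t ∈ range (n+1), n.descFactorial t * ((t+1)^2 * s^(n-t)) := by
  have eD : Dd (n+1) s
      = (∑ t ∈ range (n+1), (n+1).descFactorial (t+1) * s^(n-t)) + s^(n+1) := by
    rw [Dd, Finset.sum_range_succ' (fun t => (n+1).descFactorial t * s^((n+1)-t)) (n+1)]
    simp only [Nat.descFactorial_zero, one_mul, Nat.sub_zero, Nat.succ_sub_succ]
  have eB : (∑ t ∈ range (n+1), n.descFactorial t * ((t+1) * (s * s^(n-t))))
      = (∑ t ∈ range (n+1), n.descFactorial (t+1) * ((t+2) * s^(n-t))) + s^(n+1) := by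
    rw [Finset.sum_range_succ' (fun t => n.descFactorial t * ((t+1) * (s * s^(n-t)))) n]
    rw [Finset.sum_range_succ (fun t => n.descFactorial (t+1) * ((t+2) * s^(n-t))) n]
    have hz : n.descFactorial (n+1) = 0 := by
      exact Nat.descFactorial_eq_zero_iff_lt.mpr (by omega)
    rw [hz]
    simp only [Nat.descFactorial_zero, one_mul, Nat.sub_zero, Nat.sub_self, zero_mul, add_zero]
    have : ∀ t ∈ range n, n.descFactorial (t+1) * ((t+1+1) * (s * s^(n-(t+1))))
        = n.descFactorial (t+1) * ((t+2) * s^(n-t)) := by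
      intro t ht
      have htn : t < n := Finset.mem_range.mp ht
      have : s * s^(n-(t+1)) = s^(n-t) := by
        rw [← pow_succ']
        congr 1
        omega
      rw [this]
    rw [Finset.sum_congr rfl this]
    ring
  rw [eD, eB, Finset.mul_sum]
  have key : (∑ t ∈ range (n+1), (n+1).descFactorial (t+1) * s^(n-t))
        + ∑ t ∈ range (n+1), n * (n.descFactorial t * ((t+1) * s^(n-t)))
      = (∑ t ∈ range (n+1), n.descFactorial (t+1) * ((t+2) * s^(n-t)))
        + ∑ t ∈ range (n+1), n.descFactorial t * ((t+1)^2 * s^(n-t)) := by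
    rw [← Finset.sum_add_distrib, ← Finset.sum_add_distrib]
    apply Finset.sum_congr rfl
    intro t ht
    exact c1 n t (by have := Finset.mem_range.mp ht; omega) _
  linarith [key]

lemma c2 (n t x q : ℕ) :
    (n+1).descFactorial (t+1) * (((t+2)*x + (t+2).choose 2) * q)
      = x * ((n+1).descFactorial (t+1) * q)
        + (n+1) * (n.descFactorial t * (((t+1)*(x+1) + (t+1).choose 2) * q)) := by
  rw [Nat.succ_descFactorial_succ]
  have h : (t+2).choose 2 = (t+1) + (t+1).choose 2 := by
    rw [Nat.choose_succ_succ' (t+1) 1, Nat.choose_one_right]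
  rw [h]
  ring

lemma keyE (n x s : ℕ) : Ee (n+1) x s = x * Dd (n+1) s + (n+1) * Ee n (x+1) s := by
  rw [Ee, Dd, Ee,
    Finset.sum_range_succ'
      (fun t => (n+1).descFactorial t * (((t+1)*x + (t+1).choose 2) * s^((n+1)-t))) (n+1),
    Finset.sum_range_succ' (fun t => (n+1).descFactorial t * s^((n+1)-t)) (n+1)]
  simp only [Nat.descFactorial_zero, one_mul, Nat.sub_zero, Nat.succ_sub_succ,
    Nat.choose_one_right, zero_add]
  simp only [show Nat.choose 1 2 = 0 from rfl, add_zero]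
  rw [Nat.mul_add, Finset.mul_sum]
  have : ∀ t ∈ range (n+1),
      (n+1).descFactorial (t+1) * (((t+1+1)*x + (t+1+1).choose 2) * s^(n-t))
      = x * ((n+1).descFactorial (t+1) * s^(n-t))
        + (n+1) * (n.descFactorial t * (((t+1)*(x+1) + (t+1).choose 2) * s^(n-t))) := by
    intro t _
    exact c2 n t x _
  rw [Finset.sum_congr rfl this, Finset.sum_add_distrib, Finset.mul_sum]
  ring

lemma two_choose_two : ∀ t : ℕ, 2 * (t+1).choose 2 = t * (t+1)
  | 0 => rfl
  | t+1 => by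
    rw [Nat.choose_succ_succ' (t+1) 1, Nat.choose_one_right, Nat.mul_add, two_choose_two t]
    ring

lemma EED (n x y : ℕ) :
    Ee n (x+1) (x+y+(n+1)) + Ee n (y+1) (x+y+(n+1)) = Dd (n+1) (x+y+(n+1)) := by
  set s := x+y+(n+1) with hs
  have hT : Ee n (x+1) s + Ee n (y+1) s
      = ∑ t ∈ range (n+1), n.descFactorial t * ((t+1) * (((x+y+1)+(t+1)) * s^(n-t))) := by
    rw [Ee, Ee, ← Finset.sum_add_distrib]
    apply Finset.sum_congr rfl
    intro t _
    have e : (t+1)*((x+y+1)+(t+1)) = ((t+1)*(x+1)) + ((t+1)*(y+1)) + 2 * (t+1).choose 2 := by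
      rw [two_choose_two]; ring
    have e2 : ((t+1)*(x+1) + (t+1).choose 2) + ((t+1)*(y+1) + (t+1).choose 2)
        = (t+1)*((x+y+1)+(t+1)) := by linarith [e]
    calc n.descFactorial t * (((t+1)*(x+1) + (t+1).choose 2) * s^(n-t))
          + n.descFactorial t * (((t+1)*(y+1) + (t+1).choose 2) * s^(n-t))
        = n.descFactorial t * ((((t+1)*(x+1) + (t+1).choose 2)
            + ((t+1)*(y+1) + (t+1).choose 2)) * s^(n-t)) := by ring
      _ = _ := by rw [e2]; ring
  have hK := keyD n s
  have hTA : (∑ t ∈ range (n+1), n.descFactorial t * ((t+1) * (((x+y+1)+(t+1)) * s^(n-t))))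
      + n * ∑ t ∈ range (n+1), n.descFactorial t * ((t+1) * s^(n-t))
      = (∑ t ∈ range (n+1), n.descFactorial t * ((t+1) * (s * s^(n-t))))
        + ∑ t ∈ range (n+1), n.descFactorial t * ((t+1)^2 * s^(n-t)) := by
    rw [Finset.mul_sum, ← Finset.sum_add_distrib, ← Finset.sum_add_distrib]
    apply Finset.sum_congr rfl
    intro t _
    rw [hs]
    ring
  rw [hT]
  linarith [hK, hTA]

lemma closed (n : ℕ) :
    (∀ x y, Pp n x y = Dd n (x+y+n)) ∧ (∀ x y, Qq n x y = Ee n x (x+y+n)) := by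
  induction n with
  | zero =>
    constructor <;> intro x y <;> simp [Pp, Qq, Dd, Ee, Nat.choose]
  | succ n ih =>
    obtain ⟨ihP, ihQ⟩ := ih
    have hP : ∀ x y, Pp (n+1) x y = Dd (n+1) (x+y+(n+1)) := by
      intro x y
      rw [Pp_succ, ihQ, ihQ]
      have e1 : x+1+y+n = x+y+(n+1) := by ring
      have e2 : y+1+x+n = x+y+(n+1) := by ring
      rw [e1, e2]
      exact EED n x y
    refine ⟨hP, ?_⟩
    intro x y
    rw [Qq_succ, hP, ihQ]
    have e1 : x+1+y+n = x+y+(n+1) := by ring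
    rw [e1]
    exact (keyE n x (x+y+(n+1))).symm

lemma descFactorial_mul (m k : ℕ) :
    ∀ i, m.descFactorial k * (m-k).descFactorial i = m.descFactorial (k+i)
  | 0 => by simp
  | i+1 => by
    rw [show k+(i+1) = (k+i)+1 from rfl, Nat.descFactorial_succ, Nat.descFactorial_succ,
      ← descFactorial_mul m k i, Nat.sub_sub]
    ring

lemma choose_trinomial {m j k : ℕ} (h : j + k ≤ m) :
    m.choose j * (m-j).choose k = m.choose k * (m-k).choose j := by
  have h1 : j ≤ m := by omega
  have h2 : k ≤ m - j := by omega
  have h3 : k ≤ m := by omega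
  have h4 : j ≤ m - k := by omega
  have hL : m.choose j * (m-j).choose k * (j.factorial * (k.factorial * ((m-j)-k).factorial))
      = m.factorial := by
    calc m.choose j * (m-j).choose k * (j.factorial * (k.factorial * ((m-j)-k).factorial))
        = (m.choose j * j.factorial) * ((m-j).choose k * k.factorial * ((m-j)-k).factorial) := by
          ring
      _ = (m.choose j * j.factorial) * (m-j).factorial := by
          rw [Nat.choose_mul_factorial_mul_factorial h2]
      _ = m.factorial := by
          rw [Nat.choose_mul_factorial_mul_factorial h1]
  have hR : m.choose k * (m-k).choose j * (j.factorial * (k.factorial * ((m-j)-k).factorial))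
      = m.factorial := by
    have hsub : (m-j)-k = (m-k)-j := by omega
    calc m.choose k * (m-k).choose j * (j.factorial * (k.factorial * ((m-j)-k).factorial))
        = (m.choose k * k.factorial) * ((m-k).choose j * j.factorial * ((m-k)-j).factorial) := by
          rw [hsub]; ring
      _ = (m.choose k * k.factorial) * (m-k).factorial := by
          rw [Nat.choose_mul_factorial_mul_factorial h4]
      _ = m.factorial := by
          rw [Nat.choose_mul_factorial_mul_factorial h3]
  have hpos : 0 < j.factorial * (k.factorial * ((m-j)-k).factorial) :=
    Nat.mul_pos (Nat.factorial_pos _) (Nat.mul_pos (Nat.factorial_pos _) (Nat.factorial_pos _))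
  exact Nat.eq_of_mul_eq_mul_right hpos (hL.trans hR.symm)

lemma choose_mul_descFactorial {m j k : ℕ} (h : j + k ≤ m) :
    m.choose j * (m-j).descFactorial k = m.descFactorial k * (m-k).choose j := by
  rw [Nat.descFactorial_eq_factorial_mul_choose, Nat.descFactorial_eq_factorial_mul_choose]
  calc m.choose j * (k.factorial * (m-j).choose k)
      = k.factorial * (m.choose j * (m-j).choose k) := by ring
    _ = k.factorial * (m.choose k * (m-k).choose j) := by rw [choose_trinomial h]
    _ = k.factorial * m.choose k * (m-k).choose j := by ring

lemma tri_split (n : ℕ) (g : ℕ → ℕ → ℕ) :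
    ∑ j ∈ range (n+2), ∑ k ∈ range (((n+1)-j)+1), g j k
      = (∑ j ∈ range (n+1), ∑ k ∈ range ((n-j)+1), g j k)
        + ∑ j ∈ range (n+2), g j ((n+1)-j) := by
  rw [Finset.sum_range_succ (fun j => ∑ k ∈ range (((n+1)-j)+1), g j k) (n+1),
      Finset.sum_range_succ (fun j => g j ((n+1)-j)) (n+1)]
  simp only [Nat.sub_self, zero_add, Finset.sum_range_one]
  have e : ∀ j ∈ range (n+1), ∑ k ∈ range (((n+1)-j)+1), g j k
      = (∑ k ∈ range ((n-j)+1), g j k) + g j ((n+1)-j) := by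
    intro j hj
    have hj' : j ≤ n := by have := Finset.mem_range.mp hj; omega
    have h1 : (n+1)-j = (n-j)+1 := by omega
    rw [h1, Finset.sum_range_succ]
  rw [Finset.sum_congr rfl e, Finset.sum_add_distrib]
  linarith

lemma antidiag_reflect (n : ℕ) (f : ℕ → ℕ → ℕ) :
    ∑ j ∈ range (n+1), f j (n-j) = ∑ j ∈ range (n+1), f (n-j) j := by
  rw [← Finset.sum_range_reflect (fun j => f j (n-j)) (n+1)]
  apply Finset.sum_congr rfl
  intro j hj
  have hj' : j ≤ n := by have := Finset.mem_range.mp hj; omega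
  have h1 : n + 1 - 1 - j = n - j := by omega
  have h2 : n - (n-j) = j := by omega
  rw [h1, h2]

lemma tri_swap (f : ℕ → ℕ → ℕ) (n : ℕ) :
    ∑ j ∈ range (n+1), ∑ k ∈ range ((n-j)+1), f j k
      = ∑ k ∈ range (n+1), ∑ j ∈ range ((n-k)+1), f j k := by
  induction n with
  | zero => simp
  | succ n ih =>
    rw [show n+1+1 = n+2 from rfl, tri_split n f, tri_split n (fun a b => f b a), ih,
      antidiag_reflect (n+1) f]

lemma diag (g : ℕ → ℕ) (n : ℕ) :
    ∑ k ∈ range (n+1), ∑ i ∈ range ((n-k)+1), g (k+i)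
      = ∑ t ∈ range (n+1), (t+1) * g t := by
  induction n with
  | zero => simp
  | succ n ih =>
    rw [show n+1+1 = n+2 from rfl, tri_split n (fun k i => g (k+i))]
    have e : ∀ j ∈ range (n+2), g (j + ((n+1)-j)) = g (n+1) := by
      intro j hj
      have hj' : j ≤ n+1 := by have := Finset.mem_range.mp hj; omega
      congr 1
      omega
    rw [Finset.sum_congr rfl e, Finset.sum_const, Finset.card_range, ih,
      Finset.sum_range_succ (fun t => (t+1) * g t) (n+1)]
    ring

end BetaAux

open Finset BetaAux in
/-- For every natural number `m`,
`Σ_{j=0}^m Σ_{k=0}^{m-j} C(m,j) C(m-j,k) j^j k^k (m-j-k)^{m-j-k}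
  = Σ_{j=0}^m m^{m-j} C(m,j) (j+1)!`. -/
theorem beta_closed_form (m : ℕ) :
    (∑ j ∈ Finset.range (m + 1), ∑ k ∈ Finset.range (m - j + 1),
      m.choose j * (m - j).choose k * j ^ j * k ^ k * (m - j - k) ^ (m - j - k)) =
    ∑ j ∈ Finset.range (m + 1), m ^ (m - j) * m.choose j * (j + 1).factorial := by
  have h1 : ∀ j ∈ range (m+1),
      (∑ k ∈ Finset.range (m - j + 1),
        m.choose j * (m - j).choose k * j ^ j * k ^ k * (m - j - k) ^ (m - j - k))
      = ∑ k ∈ range ((m-j)+1), (m.choose j * j^j)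
          * ((m-j).descFactorial k * (m-j)^((m-j)-k)) := by
    intro j _
    have hp := (closed (m-j)).1 0 0
    rw [Pp, Dd] at hp
    simp only [zero_add] at hp
    calc (∑ k ∈ Finset.range (m - j + 1),
        m.choose j * (m - j).choose k * j ^ j * k ^ k * (m - j - k) ^ (m - j - k))
        = ∑ k ∈ range ((m-j)+1), (m.choose j * j^j)
            * ((m-j).choose k * (k^k * ((m-j)-k)^((m-j)-k))) := by
          apply Finset.sum_congr rfl; intro k _; ring
      _ = (m.choose j * j^j) * ∑ k ∈ range ((m-j)+1),
            (m-j).choose k * (k^k * ((m-j)-k)^((m-j)-k)) := by rw [Finset.mul_sum]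
      _ = (m.choose j * j^j) * ∑ k ∈ range ((m-j)+1),
            (m-j).descFactorial k * (m-j)^((m-j)-k) := by rw [hp]
      _ = _ := by rw [Finset.mul_sum]
  rw [Finset.sum_congr rfl h1,
    tri_swap (fun j k => (m.choose j * j^j) * ((m-j).descFactorial k * (m-j)^((m-j)-k))) m]
  have h2 : ∀ k ∈ range (m+1),
      (∑ j ∈ range ((m-k)+1),
        (m.choose j * j^j) * ((m-j).descFactorial k * (m-j)^((m-j)-k)))
      = m.descFactorial k * Dd (m-k) m := by
    intro k hk
    have hk' : k ≤ m := by have := Finset.mem_range.mp hk; omega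
    have hp := (closed (m-k)).1 0 k
    simp only [zero_add] at hp
    have hm : k + (m-k) = m := by omega
    rw [hm] at hp
    rw [← hp, Pp, Finset.mul_sum]
    apply Finset.sum_congr rfl
    intro j hj
    have hj' : j ≤ m - k := by have := Finset.mem_range.mp hj; omega
    have hjk : j + k ≤ m := by omega
    have e1 : (m-j)-k = (m-k)-j := by omega
    have e2 : m-j = k + ((m-k)-j) := by omega
    calc (m.choose j * j^j) * ((m-j).descFactorial k * (m-j)^((m-j)-k))
        = (m.choose j * (m-j).descFactorial k) * (j^j * (m-j)^((m-j)-k)) := by ring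
      _ = (m.descFactorial k * (m-k).choose j) * (j^j * (m-j)^((m-j)-k)) := by
          rw [choose_mul_descFactorial hjk]
      _ = m.descFactorial k * ((m-k).choose j * ((0+j)^j * (k+((m-k)-j))^((m-k)-j))) := by
          rw [show (m-j)^((m-j)-k) = (k+((m-k)-j))^((m-k)-j) from by rw [e1, e2]]
          ring
  rw [Finset.sum_congr rfl h2]
  have h3 : ∀ k ∈ range (m+1),
      m.descFactorial k * Dd (m-k) m
      = ∑ i ∈ range ((m-k)+1), m.descFactorial (k+i) * m^(m-(k+i)) := by
    intro k _
    rw [Dd, Finset.mul_sum]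
    apply Finset.sum_congr rfl
    intro i _
    rw [← mul_assoc, descFactorial_mul m k i, Nat.sub_sub]
  rw [Finset.sum_congr rfl h3,
    diag (fun t => m.descFactorial t * m^(m-t)) m]
  apply Finset.sum_congr rfl
  intro t _
  rw [Nat.descFactorial_eq_factorial_mul_choose, Nat.factorial_succ]
  ring
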